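/- Run the greedy lexicode algorithm over a finite principal left ideal ring R: fix an ordered basis b_1,...,b_n of R^n, set V_0 = {0}, V_i = R{b_1,...,b_i}, C_0 = {0}, and at step i, if there is a vector a_i ∈ V_i \ V_{i−1} (chosen minimal in the lexicographic order) such that P(γ a_i + c) holds for all γ ∈ Γ and c ∈ C_{i−1}, set C_i = R a_i + C_{i−1}, otherwise C_i = C_{i−1}. Then each C_i is a left submodule of R^n and P(x) holds for every nonzero x ∈ C_i. -/

import Mathlib

open Classical in
/-- The submodule `V_i = R{b_1, …, b_i}` generated by the first `i` basis vectors. -/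
noncomputable def Vlevel {R : Type*} [Ring R] {n : ℕ}
    (b : Module.Basis (Fin n) R (Fin n → R)) (i : ℕ) : Submodule R (Fin n → R) :=
  Submodule.span R (⇑b '' {j : Fin n | (j : ℕ) < i})

open Classical in
/-- The level of a vector: the least `i` with `x ∈ V_i`, computed from the highest
index of a nonzero coordinate with respect to the basis `b`. -/
noncomputable def lvl {R : Type*} [Ring R] {n : ℕ}
    (b : Module.Basis (Fin n) R (Fin n → R)) (x : Fin n → R) : ℕ :=
  Finset.univ.sup fun j : Fin n => if b.repr x j ≠ 0 then (j : ℕ) + 1 else 0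

/-- The lexicographic ordering on `Rⁿ` induced by a total order `L` on `R` and the
ordered basis `b`: first compare levels, then compare coefficient vectors
lexicographically from the highest index down. -/
def lexLt {R : Type*} [Ring R] {n : ℕ} (L : LinearOrder R)
    (b : Module.Basis (Fin n) R (Fin n → R)) (x y : Fin n → R) : Prop :=
  lvl b x < lvl b y ∨
    (lvl b x = lvl b y ∧ ∃ k : Fin n, L.lt (b.repr x k) (b.repr y k) ∧
      ∀ j : Fin n, k < j → b.repr x j = b.repr y j)

/-- A total order `L` on `R` is respectful if whenever `Rx ⊋ Ry` (both nonzero),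
some unit multiple `αx` of `x` precedes every unit multiple `uy` of `y`. -/
def RespectfulOrder {R : Type*} [Ring R] (L : LinearOrder R) : Prop :=
  ∀ x y : R, x ≠ 0 → y ≠ 0 → Ideal.span {y} < Ideal.span {x} →
    ∃ α : Rˣ, ∀ u : Rˣ, L.lt ((α : R) * x) ((u : R) * y)

/-- Admissibility of a candidate vector `x` at a stage with current code `C`:
`P(γx + c)` holds for every generator `γ ∈ Γ` and every `c ∈ C`. -/
def Admissible {R : Type*} [Ring R] {n : ℕ} (P : (Fin n → R) → Bool) (Γ : Set R)
    (C : Submodule R (Fin n → R)) (x : Fin n → R) : Prop :=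
  ∀ γ ∈ Γ, ∀ c ∈ C, P (γ • x + c) = true

/-- A run of the greedy lexicode algorithm: `C 0 = 0`, and at each step
`i = 1, …, n` either the lexicographically smallest admissible vector
`a i ∈ V_i \ V_{i-1}` is selected and `C i = R·(a i) + C (i-1)`, or no vector of
`V_i \ V_{i-1}` is admissible and `C i = C (i-1)`. -/
def GreedyRun {R : Type*} [Ring R] {n : ℕ} (L : LinearOrder R)
    (b : Module.Basis (Fin n) R (Fin n → R)) (P : (Fin n → R) → Bool) (Γ : Set R)
    (C : ℕ → Submodule R (Fin n → R)) (a : ℕ → (Fin n → R)) (sel : ℕ → Prop) : Prop :=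
  C 0 = ⊥ ∧
  ∀ i : ℕ, 1 ≤ i → i ≤ n →
    ((sel i ∧ a i ∈ Vlevel b i ∧ a i ∉ Vlevel b (i - 1) ∧
        Admissible P Γ (C (i - 1)) (a i) ∧
        (∀ x, x ∈ Vlevel b i → x ∉ Vlevel b (i - 1) →
          Admissible P Γ (C (i - 1)) x → x = a i ∨ lexLt L b (a i) x) ∧
        C i = Submodule.span R {a i} ⊔ C (i - 1))
      ∨ (¬ sel i ∧
          (∀ x, x ∈ Vlevel b i → x ∉ Vlevel b (i - 1) →
            ¬ Admissible P Γ (C (i - 1)) x) ∧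
          C i = C (i - 1)))



open Function

section Counting

universe u v

variable {R : Type v} [Ring R]

private def compMkQ {V X : Type u} [AddCommGroup V] [Module R V] [AddCommGroup X] [Module R X]
    (s : Σ K : Submodule R V, {g : (V ⧸ K) →ₗ[R] X // Injective g}) : V →ₗ[R] X :=
  s.2.1.comp s.1.mkQ

private lemma compMkQ_bijective {V X : Type u} [AddCommGroup V] [Module R V]
    [AddCommGroup X] [Module R X] :
    Bijective (compMkQ (R := R) (V := V) (X := X)) := by
  constructor
  · rintro ⟨K, g, hg⟩ ⟨K', g', hg'⟩ h
    have hker : ∀ (K : Submodule R V) (g : (V ⧸ K) →ₗ[R] X), Injective g →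
        LinearMap.ker (g.comp K.mkQ) = K := by
      intro K g hg
      rw [LinearMap.ker_comp, LinearMap.ker_eq_bot.mpr hg, Submodule.comap_bot,
        Submodule.ker_mkQ]
    have hKK' : K = K' := by
      rw [← hker K g hg, ← hker K' g' hg']
      simp only [compMkQ] at h
      rw [h]
    subst hKK'
    simp only [compMkQ] at h
    have : g = g' := Submodule.linearMap_qext _ h
    simp [this]
  · intro f
    refine ⟨⟨LinearMap.ker f, (LinearMap.ker f).liftQ f le_rfl, ?_⟩, ?_⟩
    · rw [← LinearMap.ker_eq_bot]
      exact Submodule.ker_liftQ_eq_bot _ _ _ le_rfl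
    · simp [compMkQ, Submodule.liftQ_mkQ]

instance {V : Type u} [AddCommGroup V] [Module R V] [Finite V] : Finite (Submodule R V) :=
  Finite.of_injective (fun K => (K : Set V)) SetLike.coe_injective

instance {V : Type u} [AddCommGroup V] [Module R V] [Finite V] (K : Submodule R V) :
    Finite (V ⧸ K) := Finite.of_surjective K.mkQ (Submodule.mkQ_surjective K)

noncomputable instance {V : Type u} [AddCommGroup V] [Module R V] [Finite V] :
    Fintype (Submodule R V) := Fintype.ofFinite _

instance {V X : Type*} [AddCommGroup V] [Module R V] [AddCommGroup X]
    [Module R X] [Finite V] [Finite X] : Finite (V →ₗ[R] X) :=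
  Finite.of_injective (fun f => (f : V → X)) DFunLike.coe_injective

lemma card_hom_eq_sum (V X : Type u) [AddCommGroup V] [Module R V] [AddCommGroup X]
    [Module R X] [Finite V] [Finite X] :
    Nat.card (V →ₗ[R] X) =
      ∑ K : Submodule R V, Nat.card {g : (V ⧸ K) →ₗ[R] X // Injective g} := by
  classical
  have hft : ∀ K : Submodule R V, Fintype {g : (V ⧸ K) →ₗ[R] X // Injective g} :=
    fun K => Fintype.ofFinite _
  rw [Nat.card_congr (Equiv.ofBijective _
    (compMkQ_bijective (R := R) (V := V) (X := X))).symm]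
  rw [Nat.card_eq_fintype_card, Fintype.card_sigma]
  exact Finset.sum_congr rfl fun K _ => (Nat.card_eq_fintype_card).symm

end Counting

section Lovasz

universe u v
variable {R : Type v} [Ring R]

lemma card_quotient_lt {V : Type u} [AddCommGroup V] [Module R V] [Finite V]
    {K : Submodule R V} (hK : K ≠ ⊥) : Nat.card (V ⧸ K) < Nat.card V := by
  have : Fintype V := Fintype.ofFinite _
  have : Fintype (V ⧸ K) := Fintype.ofFinite _
  rw [Nat.card_eq_fintype_card, Nat.card_eq_fintype_card]
  obtain ⟨x, hxK, hx0⟩ := (Submodule.ne_bot_iff K).mp hK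
  refine Fintype.card_lt_of_surjective_not_injective _ (Submodule.mkQ_surjective K) ?_
  intro hinj
  apply hx0
  apply hinj
  rw [map_zero, Submodule.mkQ_apply, Submodule.Quotient.mk_eq_zero]
  exact hxK

lemma inj_card_eq {X Y : Type u} [AddCommGroup X] [Module R X] [AddCommGroup Y] [Module R Y]
    [Finite X] [Finite Y]
    (h : ∀ (V : Type u) [AddCommGroup V] [Module R V] [Finite V],
      Nat.card (V →ₗ[R] X) = Nat.card (V →ₗ[R] Y)) :
    ∀ (N : ℕ) (V : Type u) [AddCommGroup V] [Module R V] [Finite V], Nat.card V ≤ N →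
      Nat.card {g : V →ₗ[R] X // Injective g} = Nat.card {g : V →ₗ[R] Y // Injective g} := by
  intro N
  induction N with
  | zero =>
    intro V _ _ _ hV
    have := Nat.card_pos (α := V)
    omega
  | succ N ih =>
    intro V _ _ _ hV
    classical
    have hs : (∑ K : Submodule R V, Nat.card {g : (V ⧸ K) →ₗ[R] X // Injective g}) =
        ∑ K : Submodule R V, Nat.card {g : (V ⧸ K) →ₗ[R] Y // Injective g} := by
      rw [← card_hom_eq_sum, ← card_hom_eq_sum]; exact h V
    have hbot : (⊥ : Submodule R V) ∈ Finset.univ := Finset.mem_univ _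
    rw [← Finset.add_sum_erase _ _ hbot, ← Finset.add_sum_erase _ _ hbot] at hs
    have htail : (∑ K ∈ Finset.univ.erase (⊥ : Submodule R V),
          Nat.card {g : (V ⧸ K) →ₗ[R] X // Injective g}) =
        ∑ K ∈ Finset.univ.erase (⊥ : Submodule R V),
          Nat.card {g : (V ⧸ K) →ₗ[R] Y // Injective g} := by
      refine Finset.sum_congr rfl fun K hK => ?_
      have hKne : K ≠ ⊥ := (Finset.mem_erase.mp hK).1
      exact ih (V ⧸ K) (by have := card_quotient_lt (R := R) hKne; omega)
    have hbots : Nat.card {g : (V ⧸ (⊥ : Submodule R V)) →ₗ[R] X // Injective g} =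
        Nat.card {g : (V ⧸ (⊥ : Submodule R V)) →ₗ[R] Y // Injective g} := by omega
    -- transfer from V ⧸ ⊥ to V
    have e : (V ⧸ (⊥ : Submodule R V)) ≃ₗ[R] V := Submodule.quotEquivOfEqBot _ rfl
    have transfer : ∀ (Z : Type u) [AddCommGroup Z] [Module R Z],
        Nat.card {g : V →ₗ[R] Z // Injective g} =
          Nat.card {g : (V ⧸ (⊥ : Submodule R V)) →ₗ[R] Z // Injective g} := by
      intro Z _ _
      refine Nat.card_congr ⟨fun g => ⟨g.1.comp e.toLinearMap, g.2.comp e.injective⟩,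
        fun g => ⟨g.1.comp e.symm.toLinearMap, g.2.comp e.symm.injective⟩, ?_, ?_⟩
      · intro g; ext z; simp
      · intro g; ext z; simp
    rw [transfer X, transfer Y]
    exact hbots

theorem exists_linearEquiv_of_card_hom_eq {X Y : Type u} [AddCommGroup X] [Module R X]
    [AddCommGroup Y] [Module R Y] [Finite X] [Finite Y]
    (h : ∀ (V : Type u) [AddCommGroup V] [Module R V] [Finite V],
      Nat.card (V →ₗ[R] X) = Nat.card (V →ₗ[R] Y)) :
    Nonempty (X ≃ₗ[R] Y) := by
  have h1 := inj_card_eq (R := R) h (Nat.card X) X le_rfl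
  have h2 := (inj_card_eq (R := R) h (Nat.card Y) Y le_rfl).symm
  have hX : Nonempty {g : X →ₗ[R] X // Injective g} := ⟨⟨LinearMap.id, fun a b hab => hab⟩⟩
  have hY : Nonempty {g : Y →ₗ[R] Y // Injective g} := ⟨⟨LinearMap.id, fun a b hab => hab⟩⟩
  have p1 : 0 < Nat.card {g : X →ₗ[R] Y // Injective g} := by
    rw [← h1]; exact Nat.card_pos
  have p2 : 0 < Nat.card {g : Y →ₗ[R] X // Injective g} := by
    rw [← h2]; exact Nat.card_pos
  obtain ⟨f, hf⟩ := (Nat.card_pos_iff.mp p1).1.some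
  obtain ⟨g, hg⟩ := (Nat.card_pos_iff.mp p2).1.some
  have hcard : Nat.card X = Nat.card Y :=
    le_antisymm (Nat.card_le_card_of_injective f hf) (Nat.card_le_card_of_injective g hg)
  have hbij : Bijective f := by
    refine ⟨hf, ?_⟩
    have : Fintype X := Fintype.ofFinite _
    have : Fintype Y := Fintype.ofFinite _
    rw [Nat.card_eq_fintype_card, Nat.card_eq_fintype_card] at hcard
    exact (Fintype.bijective_iff_injective_and_card f).mpr ⟨hf, hcard⟩ |>.2
  exact ⟨LinearEquiv.ofBijective f hbij⟩

end Lovasz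

section PowPeriod

variable {R : Type*} [Monoid R]

/-- In a finite monoid, every element has a period `k`: `x^(m + j*k) = x^m` for `m ≥ k`. -/
lemma exists_period [Finite R] (x : R) :
    ∃ k : ℕ, 1 ≤ k ∧ ∀ m j : ℕ, k ≤ m → x ^ (m + j * k) = x ^ m := by
  obtain ⟨m, n, hmn, hxmn⟩ := Finite.exists_ne_map_eq_of_infinite (fun i : ℕ => x ^ i)
  wlog hlt : m < n generalizing m n
  · exact this n m hmn.symm hxmn.symm (by omega)
  set d := n - m with hd
  have hd1 : 1 ≤ d := by omega
  have hstep : ∀ i : ℕ, m ≤ i → x ^ (i + d) = x ^ i := by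
    intro i hi
    have : x ^ (i + d) = x ^ (i - m) * x ^ n := by
      rw [← pow_add]; congr 1; omega
    rw [this, ← hxmn, ← pow_add]
    congr 1; omega
  have hrep : ∀ j i : ℕ, m ≤ i → x ^ (i + j * d) = x ^ i := by
    intro j
    induction j with
    | zero => simp
    | succ j ih =>
      intro i hi
      have : i + (j + 1) * d = (i + j * d) + d := by ring
      rw [this, hstep _ (by omega), ih i hi]
  refine ⟨(m + 1) * d, Nat.mul_pos (by omega) (by omega), ?_⟩
  intro M j hM
  have : M + j * ((m + 1) * d) = M + (j * (m + 1)) * d := by ring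
  rw [this, hrep _ _ (by nlinarith)]

end PowPeriod

section Corner

universe u
variable {R : Type u} [Ring R]

lemma one_sub_idem {f : R} (hf : f * f = f) : (1 - f) * (1 - f) = 1 - f := by
  rw [sub_mul, one_mul, mul_sub, mul_one, hf, sub_self, sub_zero]

lemma mul_mem_span_right (r x : R) : r * x ∈ Submodule.span R {x} :=
  Submodule.mem_span_singleton.mpr ⟨r, by rw [smul_eq_mul]⟩

lemma self_mem_span (x : R) : x ∈ Submodule.span R {x} :=
  Submodule.mem_span_singleton_self x

lemma span_mul_self {x e : R} (he : e * e = e) (hx : x ∈ Submodule.span R {e}) :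
    x * e = x := by
  obtain ⟨r, rfl⟩ := Submodule.mem_span_singleton.mp hx
  rw [smul_eq_mul, mul_assoc, he]

/-- Idempotent splitting: `R ≃ Re × R(1-e)` as left modules. -/
noncomputable def splitIdem (e : R) (he : e * e = e) :
    R ≃ₗ[R] (↥(Submodule.span R {e}) × ↥(Submodule.span R {1 - e})) where
  toFun x := (⟨x * e, mul_mem_span_right x e⟩, ⟨x * (1 - e), mul_mem_span_right x (1 - e)⟩)
  map_add' x y := by ext <;> simp [add_mul]
  map_smul' r x := by ext <;> simp [smul_eq_mul, mul_assoc]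
  invFun p := (p.1 : R) + (p.2 : R)
  left_inv x := by simp [mul_sub, mul_one]
  right_inv p := by
    obtain ⟨⟨a, ha⟩, ⟨b, hb⟩⟩ := p
    have hae : a * e = a := span_mul_self he ha
    have hbe : b * (1 - e) = b := span_mul_self (one_sub_idem he) hb
    have hbe' : b * e = 0 := by
      have h2 : b - b * e = b := by rwa [mul_sub, mul_one] at hbe
      exact sub_eq_self.mp h2
    have hae' : a * (1 - e) = 0 := by
      rw [mul_sub, mul_one, hae, sub_self]
    have h1 : (a + b) * e = a := by rw [add_mul, hae, hbe', add_zero]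
    have h2' : (a + b) * (1 - e) = b := by rw [add_mul, hae', hbe, zero_add]
    exact Prod.ext (Subtype.ext h1) (Subtype.ext h2')

end Corner

section CornerIso

universe u
variable {R : Type u} [Ring R]

/-- `Re ≃ Rf` when `e = qp`, `f = pq`. -/
noncomputable def spanEquivOfPQ {e f p q : R} (he : e * e = e) (hf : f * f = f)
    (hqp : q * p = e) (hpq : p * q = f) (hpe : p * e = p) (hqf : q * f = q) :
    ↥(Submodule.span R {e}) ≃ₗ[R] ↥(Submodule.span R {f}) where
  toFun x := ⟨x.1 * q, Submodule.mem_span_singleton.mpr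
    ⟨x.1 * q, by rw [smul_eq_mul, mul_assoc, hqf]⟩⟩
  map_add' x y := by ext; simp [add_mul]
  map_smul' r x := by ext; simp [smul_eq_mul, mul_assoc]
  invFun y := ⟨y.1 * p, Submodule.mem_span_singleton.mpr
    ⟨y.1 * p, by rw [smul_eq_mul, mul_assoc, hpe]⟩⟩
  left_inv x := by
    apply Subtype.ext
    simp only
    rw [mul_assoc, hqp, span_mul_self he x.2]
  right_inv y := by
    apply Subtype.ext
    simp only
    rw [mul_assoc, hpq, span_mul_self hf y.2]

/-- Postcomposition with an isomorphism. -/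
def homCongr {V A B : Type*} [AddCommGroup V] [Module R V] [AddCommGroup A] [Module R A]
    [AddCommGroup B] [Module R B] (eAB : A ≃ₗ[R] B) : (V →ₗ[R] A) ≃ (V →ₗ[R] B) where
  toFun g := eAB.toLinearMap.comp g
  invFun g := eAB.symm.toLinearMap.comp g
  left_inv g := by ext v; simp
  right_inv g := by ext v; simp

/-- Hom into a product. -/
def homProd {V A B : Type*} [AddCommGroup V] [Module R V] [AddCommGroup A] [Module R A]
    [AddCommGroup B] [Module R B] : (V →ₗ[R] A × B) ≃ (V →ₗ[R] A) × (V →ₗ[R] B) where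
  toFun g := ((LinearMap.fst R A B).comp g, (LinearMap.snd R A B).comp g)
  invFun g := g.1.prod g.2
  left_inv g := by ext v <;> simp
  right_inv g := by ext v <;> simp

lemma exists_corner [Fintype R] {e f p q : R} (he : e * e = e) (hf : f * f = f)
    (hqp : q * p = e) (hpq : p * q = f) (hpe : p * e = p) (hfp : f * p = p)
    (heq : e * q = q) (hqf : q * f = q) :
    ∃ c d : R, (1 - e) * c = c ∧ c * (1 - f) = c ∧ (1 - f) * d = d ∧ d * (1 - e) = d ∧
      c * d = 1 - e ∧ d * c = 1 - f := by
  have hfin : Finite R := Finite.of_fintype R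
  have hcond : ∀ (V : Type u) [AddCommGroup V] [Module R V] [Finite V],
      Nat.card (V →ₗ[R] ↥(Submodule.span R {1 - e})) =
        Nat.card (V →ₗ[R] ↥(Submodule.span R {1 - f})) := by
    intro V _ _ _
    have hXe : Nat.card (V →ₗ[R] ↥(Submodule.span R {e})) *
        Nat.card (V →ₗ[R] ↥(Submodule.span R {1 - e})) = Nat.card (V →ₗ[R] R) := by
      rw [← Nat.card_prod, ← Nat.card_congr (homProd (R := R))]
      exact (Nat.card_congr (homCongr (splitIdem e he) (V := V))).symm
    have hXf : Nat.card (V →ₗ[R] ↥(Submodule.span R {f})) *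
        Nat.card (V →ₗ[R] ↥(Submodule.span R {1 - f})) = Nat.card (V →ₗ[R] R) := by
      rw [← Nat.card_prod, ← Nat.card_congr (homProd (R := R))]
      exact (Nat.card_congr (homCongr (splitIdem f hf) (V := V))).symm
    have hef : Nat.card (V →ₗ[R] ↥(Submodule.span R {e})) =
        Nat.card (V →ₗ[R] ↥(Submodule.span R {f})) :=
      Nat.card_congr (homCongr (spanEquivOfPQ he hf hqp hpq hpe hqf) (V := V))
    have hpos : 0 < Nat.card (V →ₗ[R] ↥(Submodule.span R {e})) := by
      have : Nonempty (V →ₗ[R] ↥(Submodule.span R {e})) := ⟨0⟩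
      exact Nat.card_pos
    rw [hef] at hXe hpos
    exact Nat.eq_of_mul_eq_mul_left hpos (hXe.trans hXf.symm)
  obtain ⟨θ⟩ := exists_linearEquiv_of_card_hom_eq (R := R) hcond
  set x0 : ↥(Submodule.span R {1 - e}) := ⟨1 - e, self_mem_span _⟩ with hx0
  set y0 : ↥(Submodule.span R {1 - f}) := ⟨1 - f, self_mem_span _⟩ with hy0
  refine ⟨(θ x0).1, (θ.symm y0).1, ?_, ?_, ?_, ?_, ?_, ?_⟩
  · -- (1-e) * c = c
    have h1 : (1 - e) • x0 = x0 := Subtype.ext (by simp [smul_eq_mul, one_sub_idem he]; exact one_sub_idem he)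
    conv_rhs => rw [← h1]
    rw [map_smul]
    rfl
  · exact span_mul_self (one_sub_idem hf) (θ x0).2
  · have h1 : (1 - f) • y0 = y0 := Subtype.ext (by simp [smul_eq_mul, one_sub_idem hf]; exact one_sub_idem hf)
    conv_rhs => rw [← h1]
    rw [map_smul]
    rfl
  · exact span_mul_self (one_sub_idem he) (θ.symm y0).2
  · -- c * d = 1 - e
    have hc2 : (θ x0).1 * (1 - f) = (θ x0).1 := span_mul_self (one_sub_idem hf) (θ x0).2
    have key : θ x0 = (θ x0).1 • y0 := Subtype.ext (by rw [Submodule.coe_smul, smul_eq_mul]; exact hc2.symm)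
    have := θ.symm_apply_apply x0
    rw [key, map_smul] at this
    have := congrArg Subtype.val this
    simpa [smul_eq_mul] using this
  · have hd2 : (θ.symm y0).1 * (1 - e) = (θ.symm y0).1 :=
      span_mul_self (one_sub_idem he) (θ.symm y0).2
    have key : θ.symm y0 = (θ.symm y0).1 • x0 := Subtype.ext (by simp [smul_eq_mul]; exact hd2.symm)
    have := θ.apply_symm_apply y0
    rw [key, map_smul] at this
    have := congrArg Subtype.val this
    simpa [smul_eq_mul] using this

end CornerIso
section UnitAssociate

universe u
variable {R : Type u} [Ring R]

theorem exists_unit_of_span_eq [Fintype R] {x y : R}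
    (hxy : x ∈ Ideal.span {y}) (hyx : y ∈ Ideal.span {x}) :
    ∃ u : Rˣ, y = (u : R) * x := by
  obtain ⟨s, hs⟩ := Submodule.mem_span_singleton.mp hxy
  obtain ⟨t, ht⟩ := Submodule.mem_span_singleton.mp hyx
  rw [smul_eq_mul] at hs ht
  set w := s * t with hwdef
  set z := t * s with hzdef
  have hwx : w * x = x := by rw [hwdef, mul_assoc, ht, hs]
  have hzy : z * y = y := by rw [hzdef, mul_assoc, hs, ht]
  obtain ⟨k1, hk1, hp1⟩ := exists_period w
  obtain ⟨k2, hk2, hp2⟩ := exists_period z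
  set k := k1 * k2 with hkdef
  have hk : 1 ≤ k := Nat.mul_pos hk1 hk2
  have hw : ∀ m j, k ≤ m → w ^ (m + j * k) = w ^ m := by
    intro m j hm
    have h1 : m + j * k = m + (j * k2) * k1 := by rw [hkdef]; ring
    rw [h1]
    exact hp1 m _ (le_trans (Nat.le_mul_of_pos_right k1 hk2) hm)
  have hz : ∀ m j, k ≤ m → z ^ (m + j * k) = z ^ m := by
    intro m j hm
    have h1 : m + j * k = m + (j * k1) * k2 := by rw [hkdef]; ring
    rw [h1]
    exact hp2 m _ (le_trans (Nat.le_mul_of_pos_left k2 hk1) hm)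
  set e := w ^ k with hedef
  set f := z ^ k with hfdef
  have hsemi : ∀ j, t * w ^ j = z ^ j * t := by
    intro j
    have base : SemiconjBy t w z := by
      unfold SemiconjBy
      rw [hwdef, hzdef, mul_assoc]
    exact (base.pow_right j).eq
  have hsemi' : ∀ j, s * z ^ j = w ^ j * s := by
    intro j
    have base : SemiconjBy s z w := by
      unfold SemiconjBy
      rw [hwdef, hzdef, mul_assoc]
    exact (base.pow_right j).eq
  -- applied forms
  have hWW : ∀ (i j : ℕ) (c : R), w ^ i * (w ^ j * c) = w ^ (i + j) * c := by
    intro i j c; rw [← mul_assoc, ← pow_add]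
  have hZZ : ∀ (i j : ℕ) (c : R), z ^ i * (z ^ j * c) = z ^ (i + j) * c := by
    intro i j c; rw [← mul_assoc, ← pow_add]
  have hTW : ∀ (j : ℕ) (c : R), t * (w ^ j * c) = z ^ j * (t * c) := by
    intro j c; rw [← mul_assoc, hsemi j, mul_assoc]
  have hSZ : ∀ (j : ℕ) (c : R), s * (z ^ j * c) = w ^ j * (s * c) := by
    intro j c; rw [← mul_assoc, hsemi' j, mul_assoc]
  have hST : ∀ c : R, s * (t * c) = w ^ 1 * c := by
    intro c; rw [← mul_assoc, pow_one]
  have hTS : ∀ c : R, t * (s * c) = z ^ 1 * c := by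
    intro c; rw [← mul_assoc, pow_one]
  set p := t * e with hpdef
  set q := w ^ (2 * k - 1) * (s * f) with hqdef
  have he : e * e = e := by
    rw [hedef, ← pow_add]
    have h1 : k + k = k + 1 * k := by ring
    rw [h1]; exact hw k 1 le_rfl
  have hf : f * f = f := by
    rw [hfdef, ← pow_add]
    have h1 : k + k = k + 1 * k := by ring
    rw [h1]; exact hz k 1 le_rfl
  have hWW2 : ∀ i j : ℕ, w ^ i * w ^ j = w ^ (i + j) := fun i j => (pow_add w i j).symm
  have hZZ2 : ∀ i j : ℕ, z ^ i * z ^ j = z ^ (i + j) := fun i j => (pow_add z i j).symm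
  have hqp : q * p = e := by
    rw [hqdef, hpdef, hedef, hfdef]
    simp only [mul_assoc]
    rw [hSZ, hST, hWW2 1 k, hWW2 k (1 + k), hWW2 (2 * k - 1) (k + (1 + k))]
    have h1 : 2 * k - 1 + (k + (1 + k)) = k + 3 * k := by omega
    rw [h1]; exact hw k 3 le_rfl
  have hpq : p * q = f := by
    rw [hqdef, hpdef, hedef, hfdef]
    simp only [mul_assoc]
    rw [hWW k (2 * k - 1), hTW, hTS, hZZ2 1 k, hZZ2 (k + (2 * k - 1)) (1 + k)]
    have h1 : k + (2 * k - 1) + (1 + k) = k + 3 * k := by omega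
    rw [h1]; exact hz k 3 le_rfl
  have hpe : p * e = p := by
    rw [hpdef, hedef, mul_assoc, ← pow_add]
    have h1 : k + k = k + 1 * k := by ring
    rw [h1, hw k 1 le_rfl]
  have hfp : f * p = p := by
    rw [hpdef, hfdef, ← mul_assoc, ← hsemi, mul_assoc, ← pow_add]
    have h1 : k + k = k + 1 * k := by ring
    rw [h1, hw k 1 le_rfl]
  have heq : e * q = q := by
    rw [hqdef, hedef, hWW]
    have h1 : k + (2 * k - 1) = 2 * k - 1 + 1 * k := by omega
    rw [h1, hw (2 * k - 1) 1 (by omega)]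
  have hqf : q * f = q := by
    rw [hqdef, hfdef, mul_assoc, mul_assoc, ← pow_add]
    have h1 : k + k = k + 1 * k := by ring
    rw [h1, hz k 1 le_rfl]
  have hex : e * x = x := by
    rw [hedef]
    clear_value e f p q
    clear hedef
    induction k with
    | zero => rw [pow_zero, one_mul]
    | succ j ih => rw [pow_succ, mul_assoc, hwx, ih]
  have hfy : f * y = y := by
    rw [hfdef]
    clear_value e f p q
    clear hfdef
    induction k with
    | zero => rw [pow_zero, one_mul]
    | succ j ih => rw [pow_succ, mul_assoc, hzy, ih]
  clear_value e f p q
  obtain ⟨c, d, hc1, hc2, hd1, hd2, hcd, hdc⟩ := exists_corner he hf hqp hpq hpe hfp heq hqf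
  -- annihilation facts
  have hpc : p * c = 0 := by
    rw [← hc1, ← mul_assoc]
    have : p * (1 - e) = 0 := by rw [mul_sub, mul_one, hpe, sub_self]
    rw [this, zero_mul]
  have hde : d * e = 0 := by
    have h2 : d - d * e = d := by rwa [mul_sub, mul_one] at hd2
    exact sub_eq_self.mp h2
  have hdq : d * q = 0 := by rw [← heq, ← mul_assoc, hde, zero_mul]
  have hcf : c * f = 0 := by
    have h2 : c - c * f = c := by rwa [mul_sub, mul_one] at hc2
    exact sub_eq_self.mp h2
  have hcp : c * p = 0 := by rw [← hfp, ← mul_assoc, hcf, zero_mul]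
  have hfd : f * d = 0 := by
    have h2 : d - f * d = d := by rwa [sub_mul, one_mul] at hd1
    exact sub_eq_self.mp h2
  have hqd : q * d = 0 := by rw [← hqf, mul_assoc, hfd, mul_zero]
  have huv : (p + d) * (q + c) = 1 := by
    rw [add_mul, mul_add, mul_add, hpc, hdq, hpq, hdc, add_zero, zero_add, add_comm,
      sub_add_cancel]
  have hvu : (q + c) * (p + d) = 1 := by
    rw [add_mul, mul_add, mul_add, hqd, hcp, hqp, hcd, add_zero, zero_add, add_comm,
      sub_add_cancel]
  refine ⟨⟨p + d, q + c, huv, hvu⟩, ?_⟩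
  have hdx : d * x = 0 := by rw [← hex, ← mul_assoc, hde, zero_mul]
  show y = (p + d) * x
  rw [add_mul, hdx, add_zero, hpdef, mul_assoc, hex, ht]

end UnitAssociate



/-- Theorem: every code `C_i` produced by the greedy lexicode algorithm over a finite
principal left ideal ring is a left submodule of `Rⁿ` (by construction) all of whose
nonzero elements satisfy the left multiplicative property `P`. -/
theorem greedy_codes_satisfy_property {R : Type*} [Ring R] [Fintype R] {n : ℕ}
    (hPLIR : ∀ I : Ideal R, ∃ g : R, I = Ideal.span {g})
    (L : LinearOrder R) (b : Module.Basis (Fin n) R (Fin n → R))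
    (P : (Fin n → R) → Bool)
    (hP : ∀ (u : Rˣ) (x : Fin n → R), P ((u : R) • x) = P x)
    (Γ : Set R)
    (hΓ : ∀ r : R, r ≠ 0 → ∃ γ ∈ Γ, Ideal.span {r} = Ideal.span {γ})
    (C : ℕ → Submodule R (Fin n → R)) (a : ℕ → (Fin n → R)) (sel : ℕ → Prop)
    (hrun : GreedyRun L b P Γ C a sel) :
    ∀ i ≤ n, ∀ x ∈ C i, x ≠ 0 → P x = true := by
  obtain ⟨h0, hstep⟩ := hrun
  intro i
  induction i with
  | zero =>
    intro _ x hx hx0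
    rw [h0, Submodule.mem_bot] at hx
    exact absurd hx hx0
  | succ i ih =>
    intro hin x hx hx0
    have hi : i ≤ n := Nat.le_of_succ_le hin
    rcases hstep (i + 1) (by omega) hin with
      ⟨_, _, _, hadm, _, hC⟩ | ⟨_, _, hC⟩
    · simp only [Nat.add_sub_cancel] at hadm hC
      rw [hC] at hx
      rcases Submodule.mem_sup.mp hx with ⟨y, hy, c, hc, rfl⟩
      obtain ⟨r, rfl⟩ := Submodule.mem_span_singleton.mp hy
      by_cases hr : r • a (i + 1) = 0
      · rw [hr, zero_add] at hx0 ⊢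
        exact ih hi c hc hx0
      · have hrne : r ≠ 0 := fun h => hr (by rw [h, zero_smul])
        obtain ⟨γ, hγΓ, hspan⟩ := hΓ r hrne
        have hmem1 : γ ∈ Ideal.span {r} := by
          rw [hspan]; exact Ideal.subset_span rfl
        have hmem2 : r ∈ Ideal.span {γ} := by
          rw [← hspan]; exact Ideal.subset_span rfl
        obtain ⟨u, hu⟩ := exists_unit_of_span_eq hmem1 hmem2
        have hadm' := hadm γ hγΓ ((↑u⁻¹ : R) • c) (Submodule.smul_mem _ _ hc)
        have hrw : r • a (i + 1) + c = (u : R) • (γ • a (i + 1) + (↑u⁻¹ : R) • c) := by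
          rw [smul_add, ← mul_smul, ← mul_smul, ← hu, Units.mul_inv, one_smul]
        rw [hrw, hP u]
        exact hadm'
    · simp only [Nat.add_sub_cancel] at hC
      rw [hC] at hx
      exact ih hi x hx hx0
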